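/- Let F be a connected graph. For all integers n ≥ m ≥ 1, ex(n,F)/n ≥ (1 - m/n) · ex(m,F)/m, where ex(k,F) denotes the maximum number of edges of a k-vertex F-free graph. -/

import Mathlib

/-- `Contains F G` : `G` has a subgraph isomorphic to `F`. -/
def Contains {α β : Type*} (F : SimpleGraph α) (G : SimpleGraph β) : Prop :=
  ∃ f : α ↪ β, ∀ a b, F.Adj a b → G.Adj (f a) (f b)

/-- Turán number: the maximum number of edges of an `F`-free graph on `n` vertices. -/
noncomputable def exNum {α : Type*} (F : SimpleGraph α) (n : ℕ) : ℕ :=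
  sSup {m | ∃ G : SimpleGraph (Fin n), ¬ Contains F G ∧ m = G.edgeSet.ncard}

/-- `n/m` disjoint copies of `G` placed on `Fin n`. -/
def copyGraph (m n : ℕ) (hm : 0 < m) (G : SimpleGraph (Fin m)) : SimpleGraph (Fin n) where
  Adj x y := (x : ℕ) / m = (y : ℕ) / m ∧ (x : ℕ) / m < n / m ∧
    G.Adj ⟨(x : ℕ) % m, Nat.mod_lt _ hm⟩ ⟨(y : ℕ) % m, Nat.mod_lt _ hm⟩
  symm := by
    constructor
    rintro x y ⟨h1, h2, h3⟩
    exact ⟨h1.symm, h1 ▸ h2, h3.symm⟩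
  loopless := by
    constructor
    rintro x ⟨-, -, h⟩
    exact G.loopless.irrefl _ h

lemma copy_free {α : Type*} {F : SimpleGraph α} (hF : F.Connected) {m n : ℕ} (hm : 0 < m)
    {G : SimpleGraph (Fin m)} (hG : ¬ Contains F G) :
    ¬ Contains F (copyGraph m n hm G) := by
  rintro ⟨f, hf⟩
  obtain ⟨a0⟩ := hF.nonempty
  have hconst : ∀ a, ((f a : ℕ)) / m = ((f a0 : ℕ)) / m := by
    intro a
    obtain ⟨w⟩ := hF.preconnected a a0
    induction w with
    | nil => rfl
    | cons h p ih => exact ((hf _ _ h).1).trans ih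
  refine hG ⟨⟨fun a => ⟨(f a : ℕ) % m, Nat.mod_lt _ hm⟩, ?_⟩, ?_⟩
  · intro a b hab
    simp only [Fin.mk.injEq] at hab
    have hdiv : ((f a : ℕ)) / m = ((f b : ℕ)) / m := (hconst a).trans (hconst b).symm
    have h1 := Nat.div_add_mod (f a : ℕ) m
    have h2 := Nat.div_add_mod (f b : ℕ) m
    rw [hdiv, hab] at h1
    exact f.injective (Fin.ext (h1.symm.trans h2))
  · intro a b hab
    exact (hf a b hab).2.2

lemma copy_card {m n : ℕ} (hm : 0 < m) (G : SimpleGraph (Fin m)) :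
    (copyGraph m n hm G).edgeSet.ncard = (n / m) * G.edgeSet.ncard := by
  set k := n / m with hk
  have hι : ∀ (i : Fin k) (a : Fin m), (i : ℕ) * m + (a : ℕ) < n := by
    intro i a
    calc (i : ℕ) * m + (a : ℕ) < (i : ℕ) * m + m := by have := a.isLt; omega
    _ = ((i : ℕ) + 1) * m := by ring
    _ ≤ k * m := Nat.mul_le_mul_right m i.isLt
    _ ≤ n := Nat.div_mul_le_self n m
  set ι : Fin k → Fin m → Fin n := fun i a => ⟨(i : ℕ) * m + (a : ℕ), hι i a⟩ with hιdef
  have hdiv : ∀ (i : Fin k) (a : Fin m), ((ι i a : ℕ)) / m = (i : ℕ) := by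
    intro i a
    show ((i : ℕ) * m + (a : ℕ)) / m = (i : ℕ)
    rw [Nat.add_comm, Nat.add_mul_div_right _ _ hm, Nat.div_eq_of_lt a.isLt, Nat.zero_add]
  have hmod : ∀ (i : Fin k) (a : Fin m), ((ι i a : ℕ)) % m = (a : ℕ) := by
    intro i a
    show ((i : ℕ) * m + (a : ℕ)) % m = (a : ℕ)
    rw [Nat.add_comm, Nat.add_mul_mod_self_right, Nat.mod_eq_of_lt a.isLt]
  have hφmem : ∀ (i : Fin k) (s : Sym2 (Fin m)), s ∈ G.edgeSet →
      Sym2.map (ι i) s ∈ (copyGraph m n hm G).edgeSet := by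
    intro i s
    induction s using Sym2.ind with
    | _ a b =>
      intro hs
      rw [SimpleGraph.mem_edgeSet] at hs
      rw [Sym2.map_pair_eq, SimpleGraph.mem_edgeSet]
      refine ⟨by rw [hdiv, hdiv], by rw [hdiv]; exact i.isLt, ?_⟩
      have e1 : (⟨(ι i a : ℕ) % m, Nat.mod_lt _ hm⟩ : Fin m) = a := Fin.ext (hmod i a)
      have e2 : (⟨(ι i b : ℕ) % m, Nat.mod_lt _ hm⟩ : Fin m) = b := Fin.ext (hmod i b)
      rw [e1, e2]; exact hs
  set φ : Fin k × G.edgeSet → (copyGraph m n hm G).edgeSet :=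
    fun p => ⟨Sym2.map (ι p.1) p.2.1, hφmem p.1 p.2.1 p.2.2⟩ with hφdef
  -- left "inverse" for injectivity
  set blk : Sym2 (Fin n) → ℕ :=
    Sym2.lift ⟨fun x y => (x : ℕ) / m ⊔ (y : ℕ) / m, fun x y => max_comm _ _⟩ with hblk
  have hψ : ∀ (i : Fin k) (s : Sym2 (Fin m)),
      blk (Sym2.map (ι i) s) = (i : ℕ) ∧
      Sym2.map (fun x : Fin n => (x : ℕ) % m) (Sym2.map (ι i) s) = Sym2.map Fin.val s := by
    intro i s
    induction s using Sym2.ind with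
    | _ a b =>
      constructor
      · simp only [hblk, Sym2.map_pair_eq, Sym2.lift_mk, hdiv, max_self]
      · simp only [Sym2.map_pair_eq, hmod]
  have hinj : Function.Injective φ := by
    rintro ⟨i, s, hs⟩ ⟨j, t, ht⟩ h
    have h' : Sym2.map (ι i) s = Sym2.map (ι j) t := congrArg Subtype.val h
    have hi := (hψ i s).1
    have hj := (hψ j t).1
    rw [h'] at hi
    have hij : (i : ℕ) = (j : ℕ) := hi.symm.trans hj
    have hs' := (hψ i s).2
    have ht' := (hψ j t).2
    rw [h'] at hs'
    have hst : Sym2.map Fin.val s = Sym2.map Fin.val t := hs'.symm.trans ht'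
    have : s = t := Sym2.map.injective Fin.val_injective hst
    simp only [Prod.mk.injEq]
    exact ⟨Fin.ext hij, Subtype.ext this⟩
  have hsurj : Function.Surjective φ := by
    rintro ⟨s, hs⟩
    revert hs
    induction s using Sym2.ind with
    | _ x y =>
      intro hs
      rw [SimpleGraph.mem_edgeSet] at hs
      obtain ⟨h1, h2, h3⟩ := hs
      refine ⟨(⟨(x : ℕ) / m, h2⟩, ⟨s(⟨(x : ℕ) % m, Nat.mod_lt _ hm⟩, ⟨(y : ℕ) % m, Nat.mod_lt _ hm⟩),
        by rw [SimpleGraph.mem_edgeSet]; exact h3⟩), ?_⟩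
      apply Subtype.ext
      simp only [hφdef]
      rw [Sym2.map_pair_eq]
      have e1 : ι ⟨(x : ℕ) / m, h2⟩ ⟨(x : ℕ) % m, Nat.mod_lt _ hm⟩ = x := by
        apply Fin.ext
        show (x : ℕ) / m * m + (x : ℕ) % m = (x : ℕ)
        exact Nat.div_add_mod' _ _
      have e2 : ι ⟨(x : ℕ) / m, h2⟩ ⟨(y : ℕ) % m, Nat.mod_lt _ hm⟩ = y := by
        apply Fin.ext
        show (x : ℕ) / m * m + (y : ℕ) % m = (y : ℕ)
        rw [h1]
        exact Nat.div_add_mod' _ _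
      rw [e1, e2]
  calc (copyGraph m n hm G).edgeSet.ncard
      = Nat.card ((copyGraph m n hm G).edgeSet) := (Nat.card_coe_set_eq _).symm
    _ = Nat.card (Fin k × G.edgeSet) :=
        Nat.card_congr (Equiv.ofBijective φ ⟨hinj, hsurj⟩).symm
    _ = k * G.edgeSet.ncard := by
        simp [Nat.card_prod, Nat.card_coe_set_eq]

lemma le_exNum {α : Type*} (F : SimpleGraph α) {k : ℕ} {G : SimpleGraph (Fin k)}
    (hG : ¬ Contains F G) : G.edgeSet.ncard ≤ exNum F k := by
  apply le_csSup
  · refine ⟨Fintype.card (Sym2 (Fin k)), ?_⟩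
    rintro x ⟨G', -, rfl⟩
    calc G'.edgeSet.ncard ≤ (Set.univ : Set (Sym2 (Fin k))).ncard :=
          Set.ncard_le_ncard (Set.subset_univ _) Set.finite_univ
      _ = Fintype.card (Sym2 (Fin k)) := by rw [Set.ncard_univ, Nat.card_eq_fintype_card]
  · exact ⟨G, hG, rfl⟩

theorem stmt_1 {α : Type*} (F : SimpleGraph α) (hF : F.Connected)
    (m n : ℕ) (hm : 1 ≤ m) (hmn : m ≤ n) :
    (exNum F n : ℝ) / n ≥ (1 - (m : ℝ) / n) * ((exNum F m : ℝ) / m) := by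
  have hm' : 0 < m := hm
  have hn : 0 < n := lt_of_lt_of_le hm hmn
  have hn0 : (0 : ℝ) < n := by exact_mod_cast hn
  have hm0 : (0 : ℝ) < m := by exact_mod_cast hm'
  by_cases hSm : {e | ∃ G : SimpleGraph (Fin m), ¬ Contains F G ∧ e = G.edgeSet.ncard}.Nonempty
  · have hbdd : BddAbove {e | ∃ G : SimpleGraph (Fin m), ¬ Contains F G ∧ e = G.edgeSet.ncard} := by
      refine ⟨Fintype.card (Sym2 (Fin m)), ?_⟩
      rintro x ⟨G', -, rfl⟩
      calc G'.edgeSet.ncard ≤ (Set.univ : Set (Sym2 (Fin m))).ncard :=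
            Set.ncard_le_ncard (Set.subset_univ _) Set.finite_univ
        _ = Fintype.card (Sym2 (Fin m)) := by rw [Set.ncard_univ, Nat.card_eq_fintype_card]
    have hmem := Nat.sSup_mem hSm hbdd
    obtain ⟨G, hGfree, hGe⟩ := hmem
    have hGe' : exNum F m = G.edgeSet.ncard := hGe
    have hfree := copy_free (n := n) hF hm' hGfree
    have hcard := copy_card (n := n) hm' G
    have hle : (n / m) * G.edgeSet.ncard ≤ exNum F n := hcard ▸ le_exNum F hfree
    have hX : ((n / m : ℕ) : ℝ) * (exNum F m : ℝ) ≤ (exNum F n : ℝ) := by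
      rw [hGe']; exact_mod_cast hle
    have hK : (n : ℝ) - m ≤ (m : ℝ) * ((n / m : ℕ) : ℝ) := by
      have h2 := Nat.div_add_mod n m
      have h3 := Nat.mod_lt n hm'
      have : n ≤ m * (n / m) + m := by omega
      have := (Nat.cast_le (α := ℝ)).mpr this
      push_cast at this
      linarith
    have hE : (0 : ℝ) ≤ (exNum F m : ℝ) := Nat.cast_nonneg _
    rw [ge_iff_le, show (1 - (m : ℝ) / n) * ((exNum F m : ℝ) / m)
        = (((n : ℝ) - m) * (exNum F m : ℝ)) / (n * m) from by field_simp,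
      div_le_div_iff₀ (by positivity) hn0]
    nlinarith [mul_le_mul_of_nonneg_right hK (mul_nonneg hE hn0.le),
      mul_le_mul_of_nonneg_right hX (mul_nonneg hn0.le hm0.le)]
  · have h0 : exNum F m = 0 := by
      unfold exNum
      rw [Set.not_nonempty_iff_eq_empty.mp hSm]
      exact csSup_empty
    rw [h0]
    simp only [Nat.cast_zero, zero_div, mul_zero]
    positivity
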